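/- For every connected graph G, P(G,2) ≥ CMC(G)/2, where P(G,2) is the number of unordered pairs (m₁, m₂) with m₁ ≥ m₂ ≥ 1, m₁ + m₂ = e(G), realizable by a partition E(G) = E₁ ∪ E₂ into two disjoint nonempty parts each inducing a connected subgraph, and CMC(G) is the maximum, over partitions V(G) = A ∪ B into two disjoint parts with G[A] and G[B] connected, of the number of edges between A and B. -/

import Mathlib

/-- An edge set `E` induces a connected subgraph: the graph on the endpoint of edges of
`E` whose edges are exactly `E` is connected. -/
def EdgeConn {V : Type*} (E : Set (Sym2 V)) : Prop :=
  ((SimpleGraph.fromEdgeSet E).induce (SimpleGraph.fromEdgeSet E).support).Connected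

/-- The set of unordered `k`-tuples (encoded as weakly decreasing tuples) of positive
integers realizable as the part sizes of a partition of `E(G)` into `k` parts, each
inducing a connected subgraph. -/
def kEdgeTuples {V : Type*} (G : SimpleGraph V) (k : ℕ) : Set (Fin k → ℕ) :=
  {m | (∀ i, 1 ≤ m i) ∧ (∀ i j : Fin k, i ≤ j → m j ≤ m i) ∧
    ∃ E : Fin k → Set (Sym2 V), (⋃ i, E i) = G.edgeSet ∧
      (Pairwise fun i j => Disjoint (E i) (E j)) ∧
      ∀ i, EdgeConn (E i) ∧ (E i).ncard = m i}

/-- `P G k`: the number of unordered `k`-tuples realizable by connected edge partitions. -/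
noncomputable def P {V : Type*} (G : SimpleGraph V) (k : ℕ) : ℕ := (kEdgeTuples G k).ncard

/-- The set of edges of `G` crossing between `A` and its complement. -/
def cutEdges {V : Type*} (G : SimpleGraph V) (A : Set V) : Set (Sym2 V) :=
  {e | e ∈ G.edgeSet ∧ ∃ a ∈ A, ∃ b ∈ Aᶜ, e = s(a, b)}

/-- `CMC G`: maximum size of a connected cut of `G`. -/
noncomputable def CMC {V : Type*} (G : SimpleGraph V) : ℕ :=
  sSup {m | ∃ A : Set V, A.Nonempty ∧ Aᶜ.Nonempty ∧ (G.induce A).Connected ∧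
    (G.induce Aᶜ).Connected ∧ m = (cutEdges G A).ncard}

section Aux
open SimpleGraph Set
variable {V : Type*}

lemma reachable_induce_support {H : SimpleGraph V} {u v : V}
    (hu : u ∈ H.support) (hv : v ∈ H.support) (h : H.Reachable u v) :
    (H.induce H.support).Reachable ⟨u, hu⟩ ⟨v, hv⟩ := by
  obtain ⟨p⟩ := h
  revert hu hv
  induction p with
  | nil => intro hu hv; exact Reachable.refl _
  | @cons a b c hab p ih =>
      intro hu hv
      have hb : b ∈ H.support := ⟨a, hab.symm⟩
      have h1 : (H.induce H.support).Adj ⟨a, hu⟩ ⟨b, hb⟩ := hab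
      exact h1.reachable.trans (ih hb hv)

lemma edgeConn_of (G : SimpleGraph V) (C : Set V) (E : Set (Sym2 V))
    (hC : (G.induce C).Connected)
    (hEG : E ⊆ G.edgeSet)
    (hin : ∀ e ∈ G.edgeSet, (∀ v ∈ e, v ∈ C) → e ∈ E)
    (htouch : ∀ e ∈ E, ∃ x ∈ C, x ∈ e)
    (hne : E.Nonempty) : EdgeConn E := by
  set H := SimpleGraph.fromEdgeSet E with hH
  -- adjacency inside C transfers to H
  have hadj : ∀ {x y : V}, x ∈ C → y ∈ C → G.Adj x y → H.Adj x y := by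
    intro x y hx hy hxy
    rw [hH, fromEdgeSet_adj]
    refine ⟨hin _ (G.mem_edgeSet.mpr hxy) ?_, hxy.ne⟩
    intro v hv
    rw [Sym2.mem_iff] at hv
    rcases hv with rfl | rfl <;> assumption
  have hreach : ∀ {x y : V}, x ∈ C → y ∈ C → H.Reachable x y := by
    intro x y hx hy
    exact Reachable.map
      (⟨fun x => (x : V), fun hxy => hadj (Subtype.coe_prop _) (Subtype.coe_prop _) hxy⟩ :
        G.induce C →g H)
      (hC.preconnected ⟨x, hx⟩ ⟨y, hy⟩)
  -- hub
  obtain ⟨e₀, he₀⟩ := hne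
  obtain ⟨x₀, hx₀C, hx₀e⟩ := htouch e₀ he₀
  obtain ⟨y₀, rfl⟩ := Sym2.mem_iff_exists.mp hx₀e
  have hx₀y₀ : H.Adj x₀ y₀ := by
    rw [hH, fromEdgeSet_adj]
    exact ⟨he₀, fun h => (G.not_isDiag_of_mem_edgeSet (hEG he₀)) (by simp [h])⟩
  have hx₀s : x₀ ∈ H.support := ⟨y₀, hx₀y₀⟩
  -- all support vertices reach x₀
  have hub : ∀ u ∈ H.support, H.Reachable u x₀ := by
    intro u hu
    obtain ⟨w, hw⟩ := (SimpleGraph.mem_support (G := H)).mp hu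
    have hswE : s(u, w) ∈ E := by
      rw [hH, fromEdgeSet_adj] at hw; exact hw.1
    obtain ⟨x, hxC, hxe⟩ := htouch _ hswE
    rw [Sym2.mem_iff] at hxe
    rcases hxe with rfl | rfl
    · exact hreach hxC hx₀C
    · exact hw.reachable.trans (hreach hxC hx₀C)
  rw [EdgeConn, connected_iff]
  constructor
  · rintro ⟨u, hu⟩ ⟨v, hv⟩
    exact reachable_induce_support hu hv ((hub u hu).trans (hub v hv).symm)
  · exact ⟨⟨x₀, hx₀s⟩⟩

lemma kEdgeTuples_finite [Fintype V] (G : SimpleGraph V) : (kEdgeTuples G 2).Finite := by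
  have hsub : kEdgeTuples G 2 ⊆ Set.pi Set.univ (fun _ : Fin 2 => Set.Iic G.edgeSet.ncard) := by
    rintro m ⟨h1, h2, E, hE, hdisj, hEi⟩ i _
    have hsub : E i ⊆ G.edgeSet := by
      rw [← hE]; exact Set.subset_iUnion E i
    simp only [Set.mem_Iic]
    rw [← (hEi i).2]
    exact Set.ncard_le_ncard hsub (Set.toFinite _)
  exact Set.Finite.subset (Set.Finite.pi fun _ => Set.finite_Iic _) hsub

lemma cut_le_2P [Fintype V] (G : SimpleGraph V) (A : Set V)
    (hA : (G.induce A).Connected) (hB : (G.induce Aᶜ).Connected)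
    (hin : {e ∈ G.edgeSet | ∀ v ∈ e, v ∈ A}.Nonempty) :
    (cutEdges G A).ncard ≤ 2 * P G 2 := by
  set EA := {e ∈ G.edgeSet | ∀ v ∈ e, v ∈ A} with hEAdef
  set EB := {e ∈ G.edgeSet | ∀ v ∈ e, v ∈ Aᶜ} with hEBdef
  set F := cutEdges G A with hFdef
  set c := F.ncard with hc
  set eA := EA.ncard with heA
  set eB := EB.ncard with heB
  rcases Nat.eq_zero_or_pos c with h0 | hcpos
  · omega
  have hEAG : EA ⊆ G.edgeSet := fun e he => he.1
  have hEBG : EB ⊆ G.edgeSet := fun e he => he.1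
  have hFG : F ⊆ G.edgeSet := fun e he => he.1
  have hFA : Disjoint EA F := by
    rw [Set.disjoint_left]
    rintro e ⟨heG, hall⟩ ⟨-, a, ha, b, hb, rfl⟩
    exact hb (hall b (by simp))
  have hFB : Disjoint EB F := by
    rw [Set.disjoint_left]
    rintro e ⟨heG, hall⟩ ⟨-, a, ha, b, hb, rfl⟩
    exact (hall a (by simp)) ha
  have hAB : Disjoint EA EB := by
    rw [Set.disjoint_left]
    rintro e ⟨heG, hall⟩ ⟨-, hall'⟩
    exact (hall' e.out.1 (Sym2.out_fst_mem e)) (hall e.out.1 (Sym2.out_fst_mem e))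
  have hcover : EA ∪ EB ∪ F = G.edgeSet := by
    apply Set.Subset.antisymm
    · exact Set.union_subset (Set.union_subset hEAG hEBG) hFG
    · intro e he
      induction e with
      | _ u v =>
        by_cases hu : u ∈ A <;> by_cases hv : v ∈ A
        · refine Or.inl (Or.inl ⟨he, ?_⟩)
          intro w hw; rcases Sym2.mem_iff.mp hw with rfl | rfl <;> assumption
        · exact Or.inr ⟨he, u, hu, v, hv, rfl⟩
        · exact Or.inr ⟨he, v, hv, u, hu, Sym2.eq_swap⟩
        · refine Or.inl (Or.inr ⟨he, ?_⟩)
          intro w hw; rcases Sym2.mem_iff.mp hw with rfl | rfl <;> assumption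
  have heApos : 0 < eA := (Set.ncard_pos (Set.toFinite _)).mpr hin
  -- the main claim
  have claim : ∀ i, i < c → ∃ m ∈ kEdgeTuples G 2, m 0 = max (eA + i) (eB + (c - i)) := by
    intro i hic
    obtain ⟨S, hSF, hScard⟩ := Set.exists_subset_card_eq (le_of_lt hic)
    set E1 := EA ∪ S with hE1def
    set E2 := EB ∪ (F \ S) with hE2def
    have hd1 : Disjoint EA S := hFA.mono_right hSF
    have hd2 : Disjoint EB (F \ S) := hFB.mono_right Set.diff_subset
    have hdisj12 : Disjoint E1 E2 := by
      refine Disjoint.union_left (Disjoint.union_right hAB (hFA.mono_right Set.diff_subset))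
        (Disjoint.union_right (hFB.symm.mono_left hSF) Set.disjoint_sdiff_right)
    have hunion : E1 ∪ E2 = G.edgeSet := by
      have h1 : E1 ∪ E2 = EA ∪ EB ∪ F := by
        ext x
        have hx := @hSF x
        simp only [hE1def, hE2def, Set.mem_union, Set.mem_diff]
        tauto
      rw [h1, hcover]
    have hE1card : E1.ncard = eA + i := by
      rw [hE1def, Set.ncard_union_eq hd1, hScard]
    have hFScard : (F \ S).ncard = c - i := by
      rw [Set.ncard_diff hSF, hScard]
    have hE2card : E2.ncard = eB + (c - i) := by
      rw [hE2def, Set.ncard_union_eq hd2, hFScard]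
    have hconn1 : EdgeConn E1 := by
      apply edgeConn_of G A E1 hA (Set.union_subset hEAG (hSF.trans hFG))
        (fun e he hall => Or.inl ⟨he, hall⟩)
      · rintro e (⟨heG, hall⟩ | heS)
        · exact ⟨e.out.1, hall _ (Sym2.out_fst_mem e), Sym2.out_fst_mem e⟩
        · obtain ⟨-, a, ha, b, hb, rfl⟩ := hSF heS
          exact ⟨a, ha, by simp⟩
      · exact hin.mono Set.subset_union_left
    have hconn2 : EdgeConn E2 := by
      apply edgeConn_of G Aᶜ E2 hB (Set.union_subset hEBG (Set.diff_subset.trans hFG))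
        (fun e he hall => Or.inl ⟨he, hall⟩)
      · rintro e (⟨heG, hall⟩ | heFS)
        · exact ⟨e.out.1, hall _ (Sym2.out_fst_mem e), Sym2.out_fst_mem e⟩
        · obtain ⟨-, a, ha, b, hb, rfl⟩ := Set.diff_subset heFS
          exact ⟨b, hb, by simp⟩
      · refine Set.Nonempty.mono Set.subset_union_right (Set.nonempty_of_ncard_ne_zero ?_)
        rw [hFScard]; omega
    rcases le_total (eB + (c - i)) (eA + i) with hle | hle
    · refine ⟨![eA + i, eB + (c - i)], ⟨?_, ?_, ![E1, E2], ?_, ?_, ?_⟩, ?_⟩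
      · intro j
        fin_cases j <;>
          simp only [Matrix.cons_val_zero, Matrix.cons_val_one, Matrix.head_cons,
            Fin.zero_eta, Fin.mk_one] <;> omega
      · intro a b hab
        fin_cases a <;> fin_cases b <;>
          simp only [Matrix.cons_val_zero, Matrix.cons_val_one, Matrix.head_cons,
            Fin.zero_eta, Fin.mk_one] <;>
          first | omega | exact absurd hab (by decide)
      · rw [← hunion]; ext x; simp [Fin.exists_fin_two]
      · intro a b hab
        fin_cases a <;> fin_cases b
        · exact absurd rfl hab
        · exact hdisj12
        · exact hdisj12.symm
        · exact absurd rfl hab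
      · intro j
        fin_cases j
        · exact ⟨hconn1, hE1card⟩
        · exact ⟨hconn2, hE2card⟩
      · show eA + i = _
        exact (max_eq_left hle).symm
    · refine ⟨![eB + (c - i), eA + i], ⟨?_, ?_, ![E2, E1], ?_, ?_, ?_⟩, ?_⟩
      · intro j
        fin_cases j <;>
          simp only [Matrix.cons_val_zero, Matrix.cons_val_one, Matrix.head_cons,
            Fin.zero_eta, Fin.mk_one] <;> omega
      · intro a b hab
        fin_cases a <;> fin_cases b <;>
          simp only [Matrix.cons_val_zero, Matrix.cons_val_one, Matrix.head_cons,
            Fin.zero_eta, Fin.mk_one] <;>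
          first | omega | exact absurd hab (by decide)
      · rw [← hunion]; ext x; simp [Fin.exists_fin_two]; tauto
      · intro a b hab
        fin_cases a <;> fin_cases b
        · exact absurd rfl hab
        · exact hdisj12.symm
        · exact hdisj12
        · exact absurd rfl hab
      · intro j
        fin_cases j
        · exact ⟨hconn2, hE2card⟩
        · exact ⟨hconn1, hE1card⟩
      · show eB + (c - i) = _
        exact (max_eq_right hle).symm
  -- the counting
  set f : ℕ → ℕ := fun i => max (eA + i) (eB + (c - i)) with hfdef
  have himg : ∀ a ∈ (Finset.range c).image f, ((Finset.range c).filter fun x => f x = a).card ≤ 2 := by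
    intro a _
    have hsub : ((Finset.range c).filter fun x => f x = a) ⊆ {a - eA, eB + c - a} := by
      intro x hx
      simp only [Finset.mem_filter, Finset.mem_range] at hx
      obtain ⟨hxc, hfx⟩ := hx
      have hfx' : max (eA + x) (eB + (c - x)) = a := hfx
      have : a = eA + x ∨ a = eB + (c - x) := by
        rcases max_choice (eA + x) (eB + (c - x)) with h | h
        · left; omega
        · right; omega
      simp only [Finset.mem_insert, Finset.mem_singleton]
      omega
    calc ((Finset.range c).filter fun x => f x = a).card
        ≤ ({a - eA, eB + c - a} : Finset ℕ).card := Finset.card_le_card hsub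
      _ ≤ 2 := by
          apply le_trans (Finset.card_insert_le _ _); simp
  have h2c : c ≤ 2 * ((Finset.range c).image f).card := by
    have := Finset.card_le_mul_card_image (Finset.range c) 2 himg
    simpa using this
  have hsubM : ↑((Finset.range c).image f) ⊆ (fun m : Fin 2 → ℕ => m 0) '' (kEdgeTuples G 2) := by
    intro a ha
    simp only [Finset.coe_image, Finset.coe_range, Set.mem_image, Set.mem_Iio] at ha
    obtain ⟨i, hic, rfl⟩ := ha
    obtain ⟨m, hm, hm0⟩ := claim i hic
    exact ⟨m, hm, hm0⟩
  have hMfin : ((fun m : Fin 2 → ℕ => m 0) '' (kEdgeTuples G 2)).Finite :=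
    (kEdgeTuples_finite G).image _
  have h3 := Set.ncard_le_ncard hsubM hMfin
  rw [Set.ncard_coe_finset] at h3
  have h4 := Set.ncard_image_le (s := kEdgeTuples G 2) (f := fun m : Fin 2 → ℕ => m 0)
    (kEdgeTuples_finite G)
  have hP : P G 2 = (kEdgeTuples G 2).ncard := rfl
  rw [hP]
  exact h2c.trans (Nat.mul_le_mul_left 2 (h3.trans h4))

lemma cutEdges_compl (G : SimpleGraph V) (A : Set V) :
    cutEdges G Aᶜ = cutEdges G A := by
  ext e
  constructor
  · rintro ⟨he, a, ha, b, hb, rfl⟩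
    rw [compl_compl] at hb
    exact ⟨he, b, hb, a, ha, Sym2.eq_swap⟩
  · rintro ⟨he, a, ha, b, hb, rfl⟩
    exact ⟨he, b, hb, a, by simpa using ha, Sym2.eq_swap⟩

lemma no_inner_edge_singleton (G : SimpleGraph V) (C : Set V)
    (hC : (G.induce C).Connected)
    (hno : ¬ {e ∈ G.edgeSet | ∀ v ∈ e, v ∈ C}.Nonempty) :
    ∀ x ∈ C, ∀ y ∈ C, x = y := by
  intro x hx y hy
  by_contra hxy
  obtain ⟨p⟩ := hC.preconnected ⟨x, hx⟩ ⟨y, hy⟩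
  cases p with
  | nil => exact hxy rfl
  | @cons _ w _ hadj p' =>
    refine hno ⟨s(x, (w : V)), G.mem_edgeSet.mpr hadj, ?_⟩
    intro v hv
    rcases Sym2.mem_iff.mp hv with rfl | rfl
    · exact hx
    · exact w.2


end Aux

open SimpleGraph Set in
/-- for every finite connected graph `G` (with at least two edges),
`P(G,2) ≥ CMC(G)/2`. -/
theorem P_ge_CMC_div_two {V : Type*} [Fintype V] (G : SimpleGraph V)
    (hG : G.Connected) (he : 2 ≤ G.edgeSet.ncard) :
    (P G 2 : ℝ) ≥ (CMC G : ℝ) / 2 := by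
  have key : CMC G ≤ 2 * P G 2 := by
    unfold CMC
    apply csSup_le'
    rintro m ⟨A, hA1, hA2, hAc, hBc, rfl⟩
    by_cases h1 : {e ∈ G.edgeSet | ∀ v ∈ e, v ∈ A}.Nonempty
    · exact cut_le_2P G A hAc hBc h1
    by_cases h2 : {e ∈ G.edgeSet | ∀ v ∈ e, v ∈ Aᶜ}.Nonempty
    · rw [← cutEdges_compl]
      exact cut_le_2P G Aᶜ hBc (by rwa [compl_compl]) h2
    · exfalso
      obtain ⟨a, ha⟩ := hA1
      obtain ⟨b, hb⟩ := hA2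
      have hsA := no_inner_edge_singleton G A hAc h1
      have hsB := no_inner_edge_singleton G Aᶜ hBc h2
      have hss : G.edgeSet ⊆ {s(a, b)} := by
        intro e heE
        induction e with
        | _ u v =>
          have hne : u ≠ v := by
            intro h
            exact G.not_isDiag_of_mem_edgeSet heE (by simp [h])
          by_cases hu : u ∈ A <;> by_cases hv : v ∈ A
          · exact absurd (hsA u hu v hv) hne
          · have h1 := hsA u hu a ha
            have h2 := hsB v hv b hb
            simp [h1, h2]
          · have h1 := hsB u hu b hb
            have h2 := hsA v hv a ha
            simp only [Set.mem_singleton_iff]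
            rw [h1, h2]
            exact Sym2.eq_swap
          · exact absurd (hsB u hu v hv) hne
      have hle1 : G.edgeSet.ncard ≤ 1 := by
        calc G.edgeSet.ncard ≤ ({s(a, b)} : Set (Sym2 V)).ncard :=
              Set.ncard_le_ncard hss (Set.toFinite _)
          _ = 1 := Set.ncard_singleton _
      omega
  rw [ge_iff_le, div_le_iff₀ (by norm_num : (0:ℝ) < 2)]
  have hc := (Nat.cast_le (α := ℝ)).mpr key
  push_cast at hc
  linarith
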